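/- Let A ∈ ℝ^{N×N} be symmetric with eigenvalues λ1(A) ≥ λ2(A) ≥ … ordered decreasingly and λr(A) > 0, and let Ã = A + W with W symmetric. Let F ∈ ℝ^{N×r} (resp. F̃) have orthonormal columns consisting of eigenvectors of A (resp. Ã) corresponding to its r largest eigenvalues, with Λ and Λ̃ the associated diagonal matrices of these eigenvalues. Let H = FᵀF̃ have SVD AΣ̃Bᵀ and set G = ABᵀ. Define δ = λr(A) − λ_{r+1}(A). If ‖W‖₂ < δ, then ‖ΛG − GΛ̃‖ ≤ ( (2λ1(A) + ‖W‖₂)/(δ − ‖W‖₂) + 1 )·‖WF‖, where ‖·‖ may be taken to be either the Frobenius norm or the spectral norm (the same norm on both sides). -/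

import Mathlib

open Matrix MeasureTheory
open scoped Classical

noncomputable section

/-- Euclidean norm of a finitely-indexed real vector. -/
def vecNorm {n : Type*} [Fintype n] (v : n → ℝ) : ℝ :=
  Real.sqrt (∑ j, (v j) ^ 2)

/-- Spectral norm (ℓ₂ operator norm) of a real matrix. -/
def specNorm {m n : Type*} [Fintype m] [Fintype n] (A : Matrix m n ℝ) : ℝ :=
  sSup {c : ℝ | ∃ x : n → ℝ, vecNorm x ≤ 1 ∧ c = vecNorm (A.mulVec x)}

/-- Frobenius norm of a real matrix. -/
def frobNorm {m n : Type*} [Fintype m] [Fintype n] (A : Matrix m n ℝ) : ℝ :=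
  Real.sqrt (∑ i, ∑ j, (A i j) ^ 2)

/-- Entrywise maximum norm ‖·‖_∞ of a real matrix. -/
def maxNorm {m n : Type*} [Fintype m] [Fintype n] (A : Matrix m n ℝ) : ℝ :=
  ⨆ i, ⨆ j, |A i j|

/-- Two-to-infinity norm ‖·‖_{2,∞}: maximum Euclidean norm of a row. -/
def twoInfNorm {m n : Type*} [Fintype m] [Fintype n] (A : Matrix m n ℝ) : ℝ :=
  ⨆ i, vecNorm (fun j => A i j)

section AuxLemmas

variable {m n p : Type*} [Fintype m] [Fintype n] [Fintype p]

lemma vecNorm_nonneg (v : n → ℝ) : 0 ≤ vecNorm v := Real.sqrt_nonneg _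

lemma vecNorm_sq (v : n → ℝ) : vecNorm v ^ 2 = ∑ j, (v j) ^ 2 := by
  rw [vecNorm, Real.sq_sqrt]; positivity

lemma vecNorm_sq' (v : n → ℝ) : vecNorm v * vecNorm v = ∑ j, (v j) ^ 2 := by
  rw [← sq, vecNorm_sq]

lemma sq_dot (v : n → ℝ) : v ⬝ᵥ v = ∑ j, (v j)^2 := by
  simp [dotProduct, sq]

lemma vecNorm_eq_sqrt_dot (v : n → ℝ) : vecNorm v = Real.sqrt (v ⬝ᵥ v) := by
  rw [vecNorm, sq_dot]

lemma vecNorm_le_vecNorm_of_sq (v : n → ℝ) (w : m → ℝ)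
    (h : ∑ j, (v j)^2 ≤ ∑ i, (w i)^2) : vecNorm v ≤ vecNorm w :=
  Real.sqrt_le_sqrt h

lemma dot_le_vecNorm_mul (v w : n → ℝ) : v ⬝ᵥ w ≤ vecNorm v * vecNorm w := by
  have := Finset.sum_mul_sq_le_sq_mul_sq Finset.univ v w
  have h2 : (v ⬝ᵥ w)^2 ≤ (vecNorm v * vecNorm w)^2 := by
    rw [mul_pow, vecNorm_sq, vecNorm_sq]
    simpa [dotProduct] using this
  have hab : 0 ≤ vecNorm v * vecNorm w := mul_nonneg (vecNorm_nonneg v) (vecNorm_nonneg w)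
  nlinarith [h2, hab]

lemma abs_dot_le (v w : n → ℝ) : |v ⬝ᵥ w| ≤ vecNorm v * vecNorm w := by
  rcases abs_cases (v ⬝ᵥ w) with ⟨h, _⟩ | ⟨h, _⟩
  · rw [h]; exact dot_le_vecNorm_mul v w
  · rw [h, ← dotProduct_neg]
    have := dot_le_vecNorm_mul v (-w)
    have hw : vecNorm (-w) = vecNorm w := by simp [vecNorm]
    rw [hw] at this; exact this

lemma vecNorm_smul (c : ℝ) (v : n → ℝ) : vecNorm (c • v) = |c| * vecNorm v := by
  simp only [vecNorm, Pi.smul_apply, smul_eq_mul, mul_pow]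
  rw [← Finset.mul_sum, Real.sqrt_mul (sq_nonneg c), Real.sqrt_sq_eq_abs]

lemma frobNorm_nonneg (A : Matrix m n ℝ) : 0 ≤ frobNorm A := Real.sqrt_nonneg _

lemma frobNorm_sq (A : Matrix m n ℝ) : frobNorm A ^ 2 = ∑ i, ∑ j, (A i j)^2 := by
  rw [frobNorm, Real.sq_sqrt]; positivity

lemma mulVec_vecNorm_le_frob (A : Matrix m n ℝ) (x : n → ℝ) :
    vecNorm (A.mulVec x) ≤ frobNorm A * vecNorm x := by
  have h : ∑ i, (A.mulVec x i)^2 ≤ (∑ i, ∑ j, (A i j)^2) * (∑ j, (x j)^2) := by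
    rw [Finset.sum_mul]
    apply Finset.sum_le_sum
    intro i _
    simpa [Matrix.mulVec, dotProduct] using
      Finset.sum_mul_sq_le_sq_mul_sq Finset.univ (fun j => A i j) x
  calc vecNorm (A.mulVec x) = Real.sqrt (∑ i, (A.mulVec x i)^2) := rfl
    _ ≤ Real.sqrt ((∑ i, ∑ j, (A i j)^2) * (∑ j, (x j)^2)) := Real.sqrt_le_sqrt h
    _ = frobNorm A * vecNorm x := by
        rw [Real.sqrt_mul (by positivity)]; rfl

lemma specNorm_bddAbove (A : Matrix m n ℝ) :
    BddAbove {c : ℝ | ∃ x : n → ℝ, vecNorm x ≤ 1 ∧ c = vecNorm (A.mulVec x)} := by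
  refine ⟨frobNorm A, ?_⟩
  rintro c ⟨x, hx, rfl⟩
  calc vecNorm (A.mulVec x) ≤ frobNorm A * vecNorm x := mulVec_vecNorm_le_frob A x
    _ ≤ frobNorm A * 1 := by
        exact mul_le_mul_of_nonneg_left hx (frobNorm_nonneg A)
    _ = frobNorm A := mul_one _

lemma specNorm_nonneg (A : Matrix m n ℝ) : 0 ≤ specNorm A := by
  have h0 : (0:ℝ) ∈ {c : ℝ | ∃ x : n → ℝ, vecNorm x ≤ 1 ∧ c = vecNorm (A.mulVec x)} := by
    refine ⟨0, by simp [vecNorm], ?_⟩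
    simp [Matrix.mulVec_zero, vecNorm]
  exact le_csSup (specNorm_bddAbove A) h0

lemma vecNorm_mulVec_le_of_unit (A : Matrix m n ℝ) (x : n → ℝ) (hx : vecNorm x ≤ 1) :
    vecNorm (A.mulVec x) ≤ specNorm A :=
  le_csSup (specNorm_bddAbove A) ⟨x, hx, rfl⟩

lemma vecNorm_eq_zero_iff (v : n → ℝ) : vecNorm v = 0 ↔ v = 0 := by
  constructor
  · intro h
    have h2 : ∑ j, (v j)^2 = 0 := by
      have := vecNorm_sq v; rw [h] at this; simpa using this.symm
    funext j
    have := (Finset.sum_eq_zero_iff_of_nonneg (fun i _ => sq_nonneg (v i))).1 h2 j (Finset.mem_univ j)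
    exact pow_eq_zero_iff (by norm_num) |>.1 this
  · rintro rfl; simp [vecNorm]

lemma vecNorm_mulVec_le (A : Matrix m n ℝ) (x : n → ℝ) :
    vecNorm (A.mulVec x) ≤ specNorm A * vecNorm x := by
  by_cases hx : vecNorm x = 0
  · rw [(vecNorm_eq_zero_iff x).1 hx]
    simp [Matrix.mulVec_zero, vecNorm, hx]
  · have hxpos : 0 < vecNorm x := lt_of_le_of_ne (vecNorm_nonneg x) (Ne.symm hx)
    have hu : vecNorm ((vecNorm x)⁻¹ • x) ≤ 1 := by
      rw [vecNorm_smul, abs_of_pos (by positivity), inv_mul_cancel₀ hx]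
    have := vecNorm_mulVec_le_of_unit A _ hu
    rw [Matrix.mulVec_smul, vecNorm_smul, abs_of_pos (by positivity)] at this
    calc vecNorm (A.mulVec x) = vecNorm x * ((vecNorm x)⁻¹ * vecNorm (A.mulVec x)) := by
          field_simp
      _ ≤ vecNorm x * specNorm A := mul_le_mul_of_nonneg_left this (le_of_lt hxpos)
      _ = specNorm A * vecNorm x := mul_comm _ _

lemma specNorm_le_of_bound {A : Matrix m n ℝ} {c : ℝ} (hc : 0 ≤ c)
    (h : ∀ x : n → ℝ, vecNorm (A.mulVec x) ≤ c * vecNorm x) : specNorm A ≤ c := by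
  apply Real.sSup_le _ hc
  rintro b ⟨x, hx, rfl⟩
  calc vecNorm (A.mulVec x) ≤ c * vecNorm x := h x
    _ ≤ c * 1 := mul_le_mul_of_nonneg_left hx hc
    _ = c := mul_one c

lemma le_of_sq_le_sq' {a b : ℝ} (ha : 0 ≤ a) (hb : 0 ≤ b) (h : a^2 ≤ b^2) : a ≤ b := by
  nlinarith

lemma dot_mulVec_left (P : Matrix m n ℝ) (y : m → ℝ) (z : n → ℝ) :
    y ⬝ᵥ (P *ᵥ z) = (Pᵀ *ᵥ y) ⬝ᵥ z := by
  rw [Matrix.dotProduct_mulVec, ← Matrix.mulVec_transpose]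

lemma orth_mulVec_dot [DecidableEq n] {P : Matrix m n ℝ} (hP : Pᵀ * P = 1) (x y : n → ℝ) :
    (P *ᵥ x) ⬝ᵥ (P *ᵥ y) = x ⬝ᵥ y := by
  rw [dot_mulVec_left, Matrix.mulVec_mulVec, hP, Matrix.one_mulVec]

lemma orth_mulVec_vecNorm [DecidableEq n] {P : Matrix m n ℝ} (hP : Pᵀ * P = 1) (x : n → ℝ) :
    vecNorm (P *ᵥ x) = vecNorm x := by
  rw [vecNorm_eq_sqrt_dot, vecNorm_eq_sqrt_dot, orth_mulVec_dot hP]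

lemma orth_transpose_mulVec_le [DecidableEq n] {P : Matrix m n ℝ} (hP : Pᵀ * P = 1) (y : m → ℝ) :
    vecNorm (Pᵀ *ᵥ y) ≤ vecNorm y := by
  set z := Pᵀ *ᵥ y with hz
  have key : (y - P *ᵥ z) ⬝ᵥ (y - P *ᵥ z) = y ⬝ᵥ y - z ⬝ᵥ z := by
    have h1 : y ⬝ᵥ (P *ᵥ z) = z ⬝ᵥ z := by rw [dot_mulVec_left, ← hz]
    have h2 : (P *ᵥ z) ⬝ᵥ y = z ⬝ᵥ z := by
      rw [dotProduct_comm]; exact h1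
    have h3 : (P *ᵥ z) ⬝ᵥ (P *ᵥ z) = z ⬝ᵥ z := orth_mulVec_dot hP z z
    simp only [sub_dotProduct, dotProduct_sub, h1, h2, h3]
    ring
  have hnn : 0 ≤ (y - P *ᵥ z) ⬝ᵥ (y - P *ᵥ z) := by
    rw [sq_dot]; positivity
  have hle : z ⬝ᵥ z ≤ y ⬝ᵥ y := by linarith [key ▸ hnn]
  apply le_of_sq_le_sq' (vecNorm_nonneg _) (vecNorm_nonneg _)
  rw [vecNorm_sq, vecNorm_sq, ← sq_dot, ← sq_dot]
  exact hle

lemma vecNorm_triangle (u v : n → ℝ) : vecNorm (u + v) ≤ vecNorm u + vecNorm v := by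
  apply le_of_sq_le_sq' (vecNorm_nonneg _) (add_nonneg (vecNorm_nonneg u) (vecNorm_nonneg v))
  have hd := dot_le_vecNorm_mul u v
  have h1 : vecNorm (u+v)^2 = ∑ j, (u j + v j)^2 := vecNorm_sq _
  have h2 := vecNorm_sq u
  have h3 := vecNorm_sq v
  have hexp : ∑ j, (u j + v j)^2 = (∑ j, (u j)^2) + 2 * (u ⬝ᵥ v) + ∑ j, (v j)^2 := by
    simp only [dotProduct]
    rw [Finset.mul_sum, ← Finset.sum_add_distrib, ← Finset.sum_add_distrib]
    apply Finset.sum_congr rfl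
    intros; ring
  nlinarith [vecNorm_nonneg u, vecNorm_nonneg v]

lemma frobNorm_eq_vecNorm (A : Matrix m n ℝ) :
    frobNorm A = vecNorm (fun p : m × n => A p.1 p.2) := by
  rw [frobNorm, vecNorm, Fintype.sum_prod_type]

lemma frobNorm_triangle (X Y : Matrix m n ℝ) :
    frobNorm (X + Y) ≤ frobNorm X + frobNorm Y := by
  rw [frobNorm_eq_vecNorm, frobNorm_eq_vecNorm, frobNorm_eq_vecNorm]
  exact vecNorm_triangle _ _

lemma frobNorm_neg (X : Matrix m n ℝ) : frobNorm (-X) = frobNorm X := by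
  simp [frobNorm]

lemma specNorm_triangle (X Y : Matrix m n ℝ) :
    specNorm (X + Y) ≤ specNorm X + specNorm Y := by
  apply specNorm_le_of_bound (add_nonneg (specNorm_nonneg X) (specNorm_nonneg Y))
  intro x
  rw [Matrix.add_mulVec]
  calc vecNorm (X *ᵥ x + Y *ᵥ x) ≤ vecNorm (X *ᵥ x) + vecNorm (Y *ᵥ x) := vecNorm_triangle _ _
    _ ≤ specNorm X * vecNorm x + specNorm Y * vecNorm x := by
        exact add_le_add (vecNorm_mulVec_le X x) (vecNorm_mulVec_le Y x)
    _ = (specNorm X + specNorm Y) * vecNorm x := by ring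

lemma specNorm_neg (X : Matrix m n ℝ) : specNorm (-X) = specNorm X := by
  unfold specNorm
  congr 1
  ext c
  constructor <;> rintro ⟨x, hx, rfl⟩ <;> exact ⟨x, hx, by simp [Matrix.neg_mulVec, vecNorm]⟩

lemma specNorm_mul_le (X : Matrix m n ℝ) (Y : Matrix n p ℝ) :
    specNorm (X * Y) ≤ specNorm X * specNorm Y := by
  apply specNorm_le_of_bound (mul_nonneg (specNorm_nonneg X) (specNorm_nonneg Y))
  intro x
  rw [← Matrix.mulVec_mulVec]
  calc vecNorm (X *ᵥ (Y *ᵥ x)) ≤ specNorm X * vecNorm (Y *ᵥ x) := vecNorm_mulVec_le X _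
    _ ≤ specNorm X * (specNorm Y * vecNorm x) :=
        mul_le_mul_of_nonneg_left (vecNorm_mulVec_le Y x) (specNorm_nonneg X)
    _ = specNorm X * specNorm Y * vecNorm x := by ring

lemma specNorm_transpose_le (A : Matrix m n ℝ) : specNorm Aᵀ ≤ specNorm A := by
  apply specNorm_le_of_bound (specNorm_nonneg A)
  intro x
  by_cases h0 : vecNorm (Aᵀ *ᵥ x) = 0
  · rw [h0]; exact mul_nonneg (specNorm_nonneg A) (vecNorm_nonneg x)
  · have hpos : 0 < vecNorm (Aᵀ *ᵥ x) := lt_of_le_of_ne (vecNorm_nonneg _) (Ne.symm h0)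
    have key : vecNorm (Aᵀ *ᵥ x) ^ 2 ≤ specNorm A * vecNorm x * vecNorm (Aᵀ *ᵥ x) := by
      rw [vecNorm_sq, ← sq_dot]
      have h1 : (Aᵀ *ᵥ x) ⬝ᵥ (Aᵀ *ᵥ x) = x ⬝ᵥ (A *ᵥ (Aᵀ *ᵥ x)) :=
        (dot_mulVec_left A x (Aᵀ *ᵥ x)).symm
      rw [h1]
      calc x ⬝ᵥ (A *ᵥ (Aᵀ *ᵥ x)) ≤ vecNorm x * vecNorm (A *ᵥ (Aᵀ *ᵥ x)) := dot_le_vecNorm_mul _ _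
        _ ≤ vecNorm x * (specNorm A * vecNorm (Aᵀ *ᵥ x)) :=
            mul_le_mul_of_nonneg_left (vecNorm_mulVec_le A _) (vecNorm_nonneg x)
        _ = specNorm A * vecNorm x * vecNorm (Aᵀ *ᵥ x) := by ring
    have := (mul_le_mul_iff_of_pos_right hpos).1 (by
      calc vecNorm (Aᵀ *ᵥ x) * vecNorm (Aᵀ *ᵥ x) = vecNorm (Aᵀ *ᵥ x) ^ 2 := (sq _).symm
        _ ≤ specNorm A * vecNorm x * vecNorm (Aᵀ *ᵥ x) := key)
    exact this

lemma specNorm_transpose (A : Matrix m n ℝ) : specNorm Aᵀ = specNorm A := by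
  refine le_antisymm (specNorm_transpose_le A) ?_
  have := specNorm_transpose_le Aᵀ
  rwa [Matrix.transpose_transpose] at this

lemma specNorm_orth_le_one [DecidableEq n] {P : Matrix m n ℝ} (hP : Pᵀ * P = 1) :
    specNorm P ≤ 1 := by
  apply specNorm_le_of_bound zero_le_one
  intro x
  rw [orth_mulVec_vecNorm hP, one_mul]

lemma frobNorm_transpose (A : Matrix m n ℝ) : frobNorm Aᵀ = frobNorm A := by
  rw [frobNorm, frobNorm, Finset.sum_comm]
  rfl

lemma frobNorm_sq_cols (A : Matrix m n ℝ) :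
    frobNorm A ^ 2 = ∑ j, vecNorm (fun i => A i j) ^ 2 := by
  rw [frobNorm_sq, Finset.sum_comm]
  exact Finset.sum_congr rfl (fun j _ => (vecNorm_sq _).symm)

lemma col_mul (X : Matrix m n ℝ) (Y : Matrix n p ℝ) (j : p) :
    (fun i => (X * Y) i j) = X *ᵥ (fun k => Y k j) := by
  funext i
  simp [Matrix.mul_apply, Matrix.mulVec, dotProduct]

lemma frob_mul_le_spec_mul_frob (X : Matrix m n ℝ) (Y : Matrix n p ℝ) :
    frobNorm (X * Y) ≤ specNorm X * frobNorm Y := by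
  apply le_of_sq_le_sq' (frobNorm_nonneg _) (mul_nonneg (specNorm_nonneg X) (frobNorm_nonneg Y))
  rw [mul_pow, frobNorm_sq_cols, frobNorm_sq_cols]
  rw [Finset.mul_sum]
  apply Finset.sum_le_sum
  intro j _
  rw [col_mul]
  have h := vecNorm_mulVec_le X (fun k => Y k j)
  have h2 : vecNorm (X *ᵥ fun k => Y k j) ^ 2 ≤ (specNorm X * vecNorm fun k => Y k j) ^ 2 := by
    apply pow_le_pow_left₀ (vecNorm_nonneg _) h 2
  calc vecNorm (X *ᵥ fun k => Y k j) ^ 2 ≤ (specNorm X * vecNorm fun k => Y k j) ^ 2 := h2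
    _ = specNorm X ^ 2 * vecNorm (fun k => Y k j) ^ 2 := by ring

lemma frob_mul_le_frob_mul_spec (X : Matrix m n ℝ) (Y : Matrix n p ℝ) :
    frobNorm (X * Y) ≤ frobNorm X * specNorm Y := by
  have := frob_mul_le_spec_mul_frob Yᵀ Xᵀ
  rw [← Matrix.transpose_mul, frobNorm_transpose, frobNorm_transpose, specNorm_transpose] at this
  linarith

lemma specNorm_diagonal_le [DecidableEq n] {d : n → ℝ} {c : ℝ} (hc : 0 ≤ c)
    (h : ∀ i, |d i| ≤ c) : specNorm (Matrix.diagonal d) ≤ c := by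
  apply specNorm_le_of_bound hc
  intro x
  apply le_of_sq_le_sq' (vecNorm_nonneg _) (mul_nonneg hc (vecNorm_nonneg x))
  rw [mul_pow, vecNorm_sq, vecNorm_sq, Finset.mul_sum]
  apply Finset.sum_le_sum
  intro i _
  rw [Matrix.mulVec_diagonal]
  have : (d i)^2 ≤ c^2 := by
    have := h i
    nlinarith [abs_nonneg (d i), sq_abs (d i)]
  nlinarith [sq_nonneg (x i)]

lemma frobNorm_diagonal (d : n → ℝ) [DecidableEq n] :
    frobNorm (Matrix.diagonal d) ^ 2 = ∑ i, (d i)^2 := by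
  rw [frobNorm_sq]
  apply Finset.sum_congr rfl
  intro i _
  rw [Finset.sum_eq_single i]
  · simp [Matrix.diagonal]
  · intro b _ hb
    simp [Matrix.diagonal_apply_ne' d hb]
  · intro h; exact absurd (Finset.mem_univ i) h

lemma sum_dite_castLE {N r : ℕ} (hrN : r ≤ N) (g : Fin r → ℝ) :
    ∑ i : Fin N, (if h2 : (i:ℕ) < r then g ⟨i, h2⟩ else 0) = ∑ j : Fin r, g j := by
  classical
  rw [← Finset.sum_subset (Finset.filter_subset (fun i : Fin N => (i:ℕ) < r) Finset.univ)
      (fun x _ hx => by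
        rw [dif_neg]
        simpa using hx)]
  apply Finset.sum_bij' (i := fun (a : Fin N) (ha : a ∈ Finset.univ.filter (fun i : Fin N => (i:ℕ) < r)) =>
      (⟨(a:ℕ), (Finset.mem_filter.1 ha).2⟩ : Fin r))
    (j := fun (b : Fin r) (_ : b ∈ Finset.univ) => Fin.castLE hrN b)
  all_goals first
    | (intro a ha; rfl)
    | (intro a ha; exact Finset.mem_univ _)
    | (intro a ha; simp [Fin.castLE])
    | (intro a ha; rw [dif_pos (Finset.mem_filter.1 ha).2])
    | (intro a ha; apply Fin.ext; rfl)

lemma dot_diag_mulVec {N : ℕ} (d : Fin N → ℝ) (x : Fin N → ℝ) :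
    x ⬝ᵥ ((Matrix.diagonal d) *ᵥ x) = ∑ i, d i * (x i)^2 := by
  simp only [dotProduct, Matrix.mulVec_diagonal]
  apply Finset.sum_congr rfl
  intros; ring

lemma weyl_aux {N : ℕ} (Q Qt : Matrix (Fin N) (Fin N) ℝ) (lam lamt : Fin N → ℝ)
    (hQ : Qᵀ * Q = 1) (hQt : Qtᵀ * Qt = 1)
    (hlam : ∀ i j : Fin N, i ≤ j → lam j ≤ lam i)
    (hlamt : ∀ i j : Fin N, i ≤ j → lamt j ≤ lamt i)
    (Am W : Matrix (Fin N) (Fin N) ℝ)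
    (hAeig : Am = Q * Matrix.diagonal lam * Qᵀ)
    (hAteig : Am + W = Qt * Matrix.diagonal lamt * Qtᵀ)
    (k : Fin N) : lamt k ≤ lam k + specNorm W := by
  classical
  have hk1 : (k:ℕ) + 1 ≤ N := k.isLt
  have hQQt : Q * Qᵀ = 1 := mul_eq_one_comm.1 hQ
  have hQtQt : Qt * Qtᵀ = 1 := mul_eq_one_comm.1 hQt
  -- the k × (k+1) matrix and a kernel vector
  set M : Matrix (Fin (k:ℕ)) (Fin ((k:ℕ)+1)) ℝ :=
    fun a b => (Qᵀ * Qt) (Fin.castLE (le_of_lt k.isLt) a) (Fin.castLE hk1 b) with hM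
  obtain ⟨c, hc0, hMc⟩ : ∃ c : Fin ((k:ℕ)+1) → ℝ, c ≠ 0 ∧ M *ᵥ c = 0 := by
    have hni : ¬ Function.Injective M.mulVecLin := by
      intro hinj
      have := LinearMap.finrank_le_finrank_of_injective hinj
      simp only [Module.finrank_pi] at this
      simp at this
    rw [Function.not_injective_iff] at hni
    obtain ⟨a, b, hab, hne⟩ := hni
    exact ⟨a - b, sub_ne_zero.2 hne, by
      have : M.mulVecLin (a - b) = 0 := by rw [map_sub, hab, sub_self]
      simpa [Matrix.mulVecLin] using this⟩
  set cN : Fin N → ℝ := fun i => if h : (i:ℕ) < (k:ℕ)+1 then c ⟨i, h⟩ else 0 with hcN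
  set u : Fin N → ℝ := Qt *ᵥ cN with hu
  -- u ⬝ u = cN ⬝ cN > 0
  have hQtu : Qtᵀ *ᵥ u = cN := by
    rw [hu, Matrix.mulVec_mulVec, hQt, Matrix.one_mulVec]
  have huu : u ⬝ᵥ u = cN ⬝ᵥ cN := orth_mulVec_dot hQt cN cN
  have hcc_pos : 0 < cN ⬝ᵥ cN := by
    rw [sq_dot]
    obtain ⟨j, hj⟩ : ∃ j, c j ≠ 0 := by
      by_contra h
      push_neg at h
      exact hc0 (funext h)
    have hjlt : ((Fin.castLE hk1 j : Fin N) : ℕ) < (k:ℕ)+1 := j.isLt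
    have hterm : 0 < (cN (Fin.castLE hk1 j))^2 := by
      have : cN (Fin.castLE hk1 j) = c j := by
        rw [hcN]
        exact dif_pos hjlt
      rw [this]
      positivity
    apply Finset.sum_pos' (fun i _ => sq_nonneg _) ⟨Fin.castLE hk1 j, Finset.mem_univ _, hterm⟩
  -- d = Qᵀ u vanishes on indices < k
  set d : Fin N → ℝ := Qᵀ *ᵥ u with hd
  have hdzero : ∀ i : Fin N, (i:ℕ) < (k:ℕ) → d i = 0 := by
    intro i hi
    have hdi : d i = ∑ j : Fin N, (Qᵀ * Qt) i j * cN j := by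
      rw [hd, hu, Matrix.mulVec_mulVec]
      simp [Matrix.mulVec, dotProduct]
    have : d i = (M *ᵥ c) ⟨(i:ℕ), hi⟩ := by
      rw [hdi, Matrix.mulVec, dotProduct]
      rw [← sum_dite_castLE hk1 (fun j => M ⟨(i:ℕ), hi⟩ j * c j)]
      apply Finset.sum_congr rfl
      intro j _
      by_cases h : (j:ℕ) < (k:ℕ)+1
      · rw [dif_pos h, hcN]
        simp only [dif_pos h]
        rfl
      · rw [dif_neg h, hcN]
        simp only [dif_neg h, mul_zero]
    rw [this, hMc]
    rfl
  -- Rayleigh quotient computations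
  have hdd : d ⬝ᵥ d = u ⬝ᵥ u := by
    rw [hd]
    exact orth_mulVec_dot (by rw [Matrix.transpose_transpose]; exact hQQt) u u
  have hAu : u ⬝ᵥ (Am *ᵥ u) = ∑ i, lam i * (d i)^2 := by
    rw [hAeig, ← Matrix.mulVec_mulVec, ← Matrix.mulVec_mulVec, dot_mulVec_left,
      ← hd, dot_diag_mulVec]
  have hAtu : u ⬝ᵥ ((Am + W) *ᵥ u) = ∑ i, lamt i * (cN i)^2 := by
    rw [hAteig, ← Matrix.mulVec_mulVec, ← Matrix.mulVec_mulVec, dot_mulVec_left,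
      hQtu, dot_diag_mulVec]
  have hAu_le : u ⬝ᵥ (Am *ᵥ u) ≤ lam k * (u ⬝ᵥ u) := by
    rw [hAu, ← hdd, sq_dot, Finset.mul_sum]
    apply Finset.sum_le_sum
    intro i _
    by_cases hik : (i:ℕ) < (k:ℕ)
    · rw [hdzero i hik]
      simp
    · have : k ≤ i := by
        apply Fin.le_def.2
        omega
      have := hlam k i this
      nlinarith [sq_nonneg (d i)]
  have hAtu_ge : lamt k * (u ⬝ᵥ u) ≤ u ⬝ᵥ ((Am + W) *ᵥ u) := by
    rw [hAtu, huu, sq_dot, Finset.mul_sum]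
    apply Finset.sum_le_sum
    intro i _
    by_cases hik : (i:ℕ) < (k:ℕ)+1
    · have : i ≤ k := by
        apply Fin.le_def.2
        omega
      have := hlamt i k this
      nlinarith [sq_nonneg (cN i)]
    · have : cN i = 0 := by rw [hcN]; simp only [dif_neg hik]
      rw [this]
      simp
  have hWu : u ⬝ᵥ (W *ᵥ u) ≤ specNorm W * (u ⬝ᵥ u) := by
    calc u ⬝ᵥ (W *ᵥ u) ≤ vecNorm u * vecNorm (W *ᵥ u) := dot_le_vecNorm_mul _ _
      _ ≤ vecNorm u * (specNorm W * vecNorm u) :=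
          mul_le_mul_of_nonneg_left (vecNorm_mulVec_le W u) (vecNorm_nonneg u)
      _ = specNorm W * (vecNorm u * vecNorm u) := by ring
      _ = specNorm W * (u ⬝ᵥ u) := by rw [vecNorm_sq', ← sq_dot]
  have hsplit : u ⬝ᵥ ((Am + W) *ᵥ u) = u ⬝ᵥ (Am *ᵥ u) + u ⬝ᵥ (W *ᵥ u) := by
    rw [Matrix.add_mulVec, dotProduct_add]
  have huu_pos : 0 < u ⬝ᵥ u := huu ▸ hcc_pos
  have : lamt k * (u ⬝ᵥ u) ≤ (lam k + specNorm W) * (u ⬝ᵥ u) := by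
    calc lamt k * (u ⬝ᵥ u) ≤ u ⬝ᵥ ((Am + W) *ᵥ u) := hAtu_ge
      _ = u ⬝ᵥ (Am *ᵥ u) + u ⬝ᵥ (W *ᵥ u) := hsplit
      _ ≤ lam k * (u ⬝ᵥ u) + specNorm W * (u ⬝ᵥ u) := add_le_add hAu_le hWu
      _ = (lam k + specNorm W) * (u ⬝ᵥ u) := by ring
  exact le_of_mul_le_mul_right (by linarith) huu_pos

lemma exists_orth_diag {r : ℕ} (S : Matrix (Fin r) (Fin r) ℝ) (hS : Sᵀ = S) :
    ∃ (P : Matrix (Fin r) (Fin r) ℝ) (μ : Fin r → ℝ), Pᵀ * P = 1 ∧ S = P * Matrix.diagonal μ * Pᵀ := by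
  have hH : S.IsHermitian := by
    rw [Matrix.IsHermitian, Matrix.conjTranspose_eq_transpose_of_trivial]
    simpa using hS
  refine ⟨(Matrix.IsHermitian.eigenvectorUnitary hH : Matrix (Fin r) (Fin r) ℝ), hH.eigenvalues, ?_, ?_⟩
  · have := (Matrix.mem_unitaryGroup_iff'.mp (Matrix.IsHermitian.eigenvectorUnitary hH).2)
    simpa [Matrix.star_eq_conjTranspose, Matrix.conjTranspose_eq_transpose_of_trivial] using this
  · have := hH.spectral_theorem
    simpa [Matrix.star_eq_conjTranspose, Matrix.conjTranspose_eq_transpose_of_trivial] using this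

lemma dk_spec {N r : ℕ} (hr : 0 < r) (Y Y' : Matrix (Fin N) (Fin r) ℝ)
    (lamt : Fin N → ℝ) (lam' : Fin r → ℝ) (c₁ c₂ : ℝ)
    (hrow : ∀ i : Fin N, (i:ℕ) < r → ∀ j, Y i j = 0)
    (hcomm : Y' = Matrix.diagonal lamt * Y - Y * Matrix.diagonal lam')
    (h1 : ∀ j, c₁ ≤ lam' j) (h2 : ∀ i : Fin N, r ≤ (i:ℕ) → lamt i ≤ c₂)
    (hg : 0 ≤ c₁ - c₂) :
    (c₁ - c₂) * specNorm Y ≤ specNorm Y' := by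
  classical
  set S := Yᵀ * Y with hSdef
  have hSsymm : Sᵀ = S := by
    rw [hSdef, Matrix.transpose_mul, Matrix.transpose_transpose]
  obtain ⟨P, μ, hP, hdec⟩ := exists_orth_diag S hSsymm
  have hPP : P * Pᵀ = 1 := mul_eq_one_comm.1 hP
  -- quadratic form identity
  have hquad : ∀ x : Fin r → ℝ, (Y *ᵥ x) ⬝ᵥ (Y *ᵥ x) = ∑ i, μ i * ((Pᵀ *ᵥ x) i)^2 := by
    intro x
    have h1' : (Y *ᵥ x) ⬝ᵥ (Y *ᵥ x) = x ⬝ᵥ (S *ᵥ x) := by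
      rw [dot_mulVec_left, Matrix.mulVec_mulVec, ← hSdef, dotProduct_comm]
    rw [h1', hdec, ← Matrix.mulVec_mulVec, ← Matrix.mulVec_mulVec, dot_mulVec_left,
      dot_diag_mulVec]
  -- max eigenvalue
  obtain ⟨istar, _, hmax⟩ := Finset.exists_max_image Finset.univ μ ⟨⟨0, hr⟩, Finset.mem_univ _⟩
  set μs := μ istar with hμs
  have hquad_le : ∀ x : Fin r → ℝ, (Y *ᵥ x) ⬝ᵥ (Y *ᵥ x) ≤ μs * (vecNorm x)^2 := by
    intro x
    rw [hquad]
    have hnorm : vecNorm (Pᵀ *ᵥ x) = vecNorm x :=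
      orth_mulVec_vecNorm (by rw [Matrix.transpose_transpose]; exact hPP) x
    calc ∑ i, μ i * ((Pᵀ *ᵥ x) i)^2 ≤ ∑ i, μs * ((Pᵀ *ᵥ x) i)^2 := by
          apply Finset.sum_le_sum
          intro i _
          nlinarith [sq_nonneg ((Pᵀ *ᵥ x) i), hmax i (Finset.mem_univ i)]
      _ = μs * (vecNorm (Pᵀ *ᵥ x))^2 := by rw [vecNorm_sq, Finset.mul_sum]
      _ = μs * (vecNorm x)^2 := by rw [hnorm]
  by_cases hμpos : μs ≤ 0
  · -- Y has zero spectral norm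
    have hzero : specNorm Y ≤ 0 := by
      apply specNorm_le_of_bound le_rfl
      intro x
      have := hquad_le x
      have h0 : (Y *ᵥ x) ⬝ᵥ (Y *ᵥ x) ≤ 0 :=
        le_trans this (mul_nonpos_of_nonpos_of_nonneg hμpos (sq_nonneg _))
      have : vecNorm (Y *ᵥ x) = 0 := by
        have := vecNorm_sq (Y *ᵥ x)
        have hge : 0 ≤ (Y *ᵥ x) ⬝ᵥ (Y *ᵥ x) := by rw [sq_dot]; positivity
        have : vecNorm (Y *ᵥ x) ^ 2 = 0 := by rw [vecNorm_sq, ← sq_dot]; linarith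
        nlinarith [vecNorm_nonneg (Y *ᵥ x)]
      rw [this]; simp
    have hY0 : specNorm Y = 0 := le_antisymm hzero (specNorm_nonneg Y)
    rw [hY0, mul_zero]
    exact specNorm_nonneg Y'
  · push_neg at hμpos
    set s := Real.sqrt μs with hs
    have hspos : 0 < s := Real.sqrt_pos.2 hμpos
    have hssq : s^2 = μs := Real.sq_sqrt (le_of_lt hμpos)
    -- top singular vectors
    set u : Fin r → ℝ := fun k => P k istar with hudef
    have huu : u ⬝ᵥ u = 1 := by
      have : u ⬝ᵥ u = (Pᵀ * P) istar istar := by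
        simp [Matrix.mul_apply, dotProduct, hudef, Matrix.transpose_apply]
      rw [this, hP]
      simp
    have hu_norm : vecNorm u = 1 := by
      rw [vecNorm_eq_sqrt_dot, huu, Real.sqrt_one]
    have hSu : S *ᵥ u = μs • u := by
      have hcol : (fun k => (S * P) k istar) = S *ᵥ u := col_mul S P istar
      have hcol2 : S * P = P * Matrix.diagonal μ := by
        rw [hdec, Matrix.mul_assoc, Matrix.mul_assoc, hP, Matrix.mul_one]
      funext k
      have := congrFun hcol k
      rw [← this, hcol2, Matrix.mul_diagonal]
      simp [hudef, hμs, mul_comm]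
    have hYuYu : (Y *ᵥ u) ⬝ᵥ (Y *ᵥ u) = μs := by
      have : (Y *ᵥ u) ⬝ᵥ (Y *ᵥ u) = u ⬝ᵥ (S *ᵥ u) := by
        rw [dot_mulVec_left, Matrix.mulVec_mulVec, ← hSdef, dotProduct_comm]
      rw [this, hSu, dotProduct_smul, huu]
      simp
    have hYu_norm : vecNorm (Y *ᵥ u) = s := by
      rw [vecNorm_eq_sqrt_dot, hYuYu]
    set v : Fin N → ℝ := (1/s) • (Y *ᵥ u) with hvdef
    have hv_norm : vecNorm v = 1 := by
      rw [hvdef, vecNorm_smul, hYu_norm, abs_of_pos (by positivity)]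
      field_simp
    have hsv : s • v = Y *ᵥ u := by
      rw [hvdef, smul_smul]
      field_simp
      rw [one_smul]
    have hYtv : Yᵀ *ᵥ v = s • u := by
      rw [hvdef, Matrix.mulVec_smul, Matrix.mulVec_mulVec, ← hSdef, hSu, smul_smul]
      congr 1
      rw [div_mul_eq_mul_div, one_mul, div_eq_iff (ne_of_gt hspos), ← hssq]
      ring
    have hvzero : ∀ i : Fin N, (i:ℕ) < r → v i = 0 := by
      intro i hi
      rw [hvdef]
      have : (Y *ᵥ u) i = 0 := by
        rw [Matrix.mulVec, dotProduct]
        apply Finset.sum_eq_zero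
        intro j _
        rw [hrow i hi j, zero_mul]
      simp [this]
    -- the key inner product estimate
    have hkey : v ⬝ᵥ (Y' *ᵥ u) ≤ s * (c₂ - c₁) := by
      rw [hcomm, Matrix.sub_mulVec, dotProduct_sub]
      have ht1 : v ⬝ᵥ ((Matrix.diagonal lamt * Y) *ᵥ u) ≤ s * c₂ := by
        have he : v ⬝ᵥ ((Matrix.diagonal lamt * Y) *ᵥ u) = s * ∑ i, lamt i * (v i)^2 := by
          rw [← Matrix.mulVec_mulVec, ← hsv, Matrix.mulVec_smul, dotProduct_smul,
            dot_diag_mulVec, smul_eq_mul]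
        rw [he]
        have hsum : ∑ i, lamt i * (v i)^2 ≤ c₂ := by
          have hle : ∑ i, lamt i * (v i)^2 ≤ ∑ i, c₂ * (v i)^2 := by
            apply Finset.sum_le_sum
            intro i _
            by_cases hi : (i:ℕ) < r
            · rw [hvzero i hi]; simp
            · push_neg at hi
              nlinarith [sq_nonneg (v i), h2 i hi]
          have h1' : ∑ i, c₂ * (v i)^2 = c₂ := by
            rw [← Finset.mul_sum, ← vecNorm_sq, hv_norm]
            simp
          linarith
        exact mul_le_mul_of_nonneg_left hsum (le_of_lt hspos)
      have ht2 : s * c₁ ≤ v ⬝ᵥ ((Y * Matrix.diagonal lam') *ᵥ u) := by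
        have he : v ⬝ᵥ ((Y * Matrix.diagonal lam') *ᵥ u) = s * ∑ j, lam' j * (u j)^2 := by
          rw [← Matrix.mulVec_mulVec, dot_mulVec_left, hYtv, smul_dotProduct,
            dot_diag_mulVec, smul_eq_mul]
        rw [he]
        have hsum : c₁ ≤ ∑ j, lam' j * (u j)^2 := by
          have h1' : ∑ j, c₁ * (u j)^2 = c₁ := by
            rw [← Finset.mul_sum, ← vecNorm_sq, hu_norm]
            simp
          have hle : ∑ j, c₁ * (u j)^2 ≤ ∑ j, lam' j * (u j)^2 := by
            apply Finset.sum_le_sum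
            intro j _
            nlinarith [sq_nonneg (u j), h1 j]
          linarith
        exact mul_le_mul_of_nonneg_left hsum (le_of_lt hspos)
      have := sub_le_sub ht1 ht2
      linarith [this]
    -- |v ⬝ᵥ Y'u| ≤ ‖Y'‖
    have hbound : -(specNorm Y') ≤ v ⬝ᵥ (Y' *ᵥ u) := by
      have habs := abs_dot_le v (Y' *ᵥ u)
      have h1' : vecNorm (Y' *ᵥ u) ≤ specNorm Y' := by
        have := vecNorm_mulVec_le Y' u
        rw [hu_norm, mul_one] at this
        exact this
      have h2' : |v ⬝ᵥ (Y' *ᵥ u)| ≤ specNorm Y' := by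
        calc |v ⬝ᵥ (Y' *ᵥ u)| ≤ vecNorm v * vecNorm (Y' *ᵥ u) := habs
          _ = vecNorm (Y' *ᵥ u) := by rw [hv_norm, one_mul]
          _ ≤ specNorm Y' := h1'
      linarith [neg_abs_le (v ⬝ᵥ (Y' *ᵥ u))]
    have hsg : s * (c₁ - c₂) ≤ specNorm Y' := by
      nlinarith [hkey, hbound]
    -- ‖Y‖ ≤ s
    have hYle : specNorm Y ≤ s := by
      apply specNorm_le_of_bound (le_of_lt hspos)
      intro x
      apply le_of_sq_le_sq' (vecNorm_nonneg _) (mul_nonneg (le_of_lt hspos) (vecNorm_nonneg x))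
      rw [mul_pow, hssq, vecNorm_sq, ← sq_dot]
      exact hquad_le x
    calc (c₁ - c₂) * specNorm Y ≤ (c₁ - c₂) * s := mul_le_mul_of_nonneg_left hYle hg
      _ = s * (c₁ - c₂) := mul_comm _ _
      _ ≤ specNorm Y' := hsg

lemma dk_frob {N r : ℕ} (Y Y' : Matrix (Fin N) (Fin r) ℝ) (g : ℝ) (hg : 0 ≤ g)
    (h : ∀ i j, g * |Y i j| ≤ |Y' i j|) : g * frobNorm Y ≤ frobNorm Y' := by
  apply le_of_sq_le_sq' (mul_nonneg hg (frobNorm_nonneg Y)) (frobNorm_nonneg Y')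
  rw [mul_pow, frobNorm_sq, frobNorm_sq, Finset.mul_sum]
  apply Finset.sum_le_sum
  intro i _
  rw [Finset.mul_sum]
  apply Finset.sum_le_sum
  intro j _
  have h1 := h i j
  have h2 := mul_le_mul h1 h1 (mul_nonneg hg (abs_nonneg (Y i j))) (abs_nonneg (Y' i j))
  nlinarith [sq_abs (Y i j), sq_abs (Y' i j)]

lemma spec_contract_left {P : Matrix m n ℝ} (M : Matrix n p ℝ) (hP : specNorm P ≤ 1) :
    specNorm (P * M) ≤ specNorm M := by
  calc specNorm (P * M) ≤ specNorm P * specNorm M := specNorm_mul_le P M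
    _ ≤ 1 * specNorm M := mul_le_mul_of_nonneg_right hP (specNorm_nonneg M)
    _ = specNorm M := one_mul _

lemma spec_contract_right (M : Matrix m n ℝ) {P : Matrix n p ℝ} (hP : specNorm P ≤ 1) :
    specNorm (M * P) ≤ specNorm M := by
  calc specNorm (M * P) ≤ specNorm M * specNorm P := specNorm_mul_le M P
    _ ≤ specNorm M * 1 := mul_le_mul_of_nonneg_left hP (specNorm_nonneg M)
    _ = specNorm M := mul_one _

lemma frob_contract_left {P : Matrix m n ℝ} (M : Matrix n p ℝ) (hP : specNorm P ≤ 1) :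
    frobNorm (P * M) ≤ frobNorm M := by
  calc frobNorm (P * M) ≤ specNorm P * frobNorm M := frob_mul_le_spec_mul_frob P M
    _ ≤ 1 * frobNorm M := mul_le_mul_of_nonneg_right hP (frobNorm_nonneg M)
    _ = frobNorm M := one_mul _

lemma frob_contract_right (M : Matrix m n ℝ) {P : Matrix n p ℝ} (hP : specNorm P ≤ 1) :
    frobNorm (M * P) ≤ frobNorm M := by
  calc frobNorm (M * P) ≤ frobNorm M * specNorm P := frob_mul_le_frob_mul_spec M P
    _ ≤ frobNorm M * 1 := mul_le_mul_of_nonneg_left hP (frobNorm_nonneg M)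
    _ = frobNorm M := mul_one _

lemma frobNorm_sub_le (X Y : Matrix m n ℝ) : frobNorm (X - Y) ≤ frobNorm X + frobNorm Y := by
  rw [sub_eq_add_neg]
  calc frobNorm (X + -Y) ≤ frobNorm X + frobNorm (-Y) := frobNorm_triangle X (-Y)
    _ = frobNorm X + frobNorm Y := by rw [frobNorm_neg]

lemma specNorm_sub_le (X Y : Matrix m n ℝ) : specNorm (X - Y) ≤ specNorm X + specNorm Y := by
  rw [sub_eq_add_neg]
  calc specNorm (X + -Y) ≤ specNorm X + specNorm (-Y) := specNorm_triangle X (-Y)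
    _ = specNorm X + specNorm Y := by rw [specNorm_neg]

lemma orth_submatrix {N r : ℕ} {Q : Matrix (Fin N) (Fin N) ℝ} (hQ : Qᵀ * Q = 1)
    (e : Fin r → Fin N) (he : Function.Injective e) :
    (Q.submatrix id e)ᵀ * (Q.submatrix id e) = 1 := by
  ext a b
  have h1 : ((Q.submatrix id e)ᵀ * (Q.submatrix id e)) a b = (Qᵀ * Q) (e a) (e b) := by
    simp [Matrix.mul_apply]
  rw [h1, hQ]
  by_cases hab : a = b
  · subst hab
    simp [Matrix.one_apply]
  · rw [Matrix.one_apply_ne (fun h => hab (he h)), Matrix.one_apply_ne hab]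


end AuxLemmas

set_option maxHeartbeats 2000000 in
/-- Eigenvalue–rotation commutation bound `‖ΛG − GΛ̃‖ ≤ ((2λ₁(A) + ‖W‖₂)/(δ − ‖W‖₂) + 1)·‖WF‖`
in both the Frobenius and the spectral norm (modified Ding–Chen, Lemma 2). -/
theorem stmt10 {N r : ℕ} (hr : 0 < r) (hrN : r < N)
    (Am W : Matrix (Fin N) (Fin N) ℝ) (hAsymm : Am.IsSymm) (hWsymm : W.IsSymm)
    -- eigendecompositions of A and Ã = A + W with decreasing eigenvalues
    (Q Qt : Matrix (Fin N) (Fin N) ℝ) (lam lamt : Fin N → ℝ)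
    (hQ : Qᵀ * Q = 1) (hQt : Qtᵀ * Qt = 1)
    (hlam : ∀ i j : Fin N, i ≤ j → lam j ≤ lam i)
    (hlamt : ∀ i j : Fin N, i ≤ j → lamt j ≤ lamt i)
    (hAeig : Am = Q * Matrix.diagonal lam * Qᵀ)
    (hAteig : Am + W = Qt * Matrix.diagonal lamt * Qtᵀ)
    (hpos : 0 < lam ⟨r - 1, by omega⟩)
    -- F, F̃: orthonormal eigenvectors for the r largest eigenvalues, Λ, Λ̃ the eigenvalues
    (F Ft : Matrix (Fin N) (Fin r) ℝ)
    (hF : F = Q.submatrix id (Fin.castLE hrN.le))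
    (hFt : Ft = Qt.submatrix id (Fin.castLE hrN.le))
    (Lam Lamt : Matrix (Fin r) (Fin r) ℝ)
    (hLam : Lam = Matrix.diagonal fun i => lam (Fin.castLE hrN.le i))
    (hLamt : Lamt = Matrix.diagonal fun i => lamt (Fin.castLE hrN.le i))
    -- SVD of H = FᵀF̃ and the rotation G
    (A' B' : Matrix (Fin r) (Fin r) ℝ) (σtil : Fin r → ℝ)
    (hA' : A'ᵀ * A' = 1) (hB' : B'ᵀ * B' = 1) (hσtil : ∀ i, 0 ≤ σtil i)
    (hH : Fᵀ * Ft = A' * Matrix.diagonal σtil * B'ᵀ)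
    (G : Matrix (Fin r) (Fin r) ℝ) (hG : G = A' * B'ᵀ)
    -- eigengap condition
    (δ : ℝ) (hδ : δ = lam ⟨r - 1, by omega⟩ - lam ⟨r, hrN⟩)
    (hW : specNorm W < δ) :
    frobNorm (Lam * G - G * Lamt) ≤
      ((2 * lam ⟨0, by omega⟩ + specNorm W) / (δ - specNorm W) + 1) * frobNorm (W * F) ∧
    specNorm (Lam * G - G * Lamt) ≤
      ((2 * lam ⟨0, by omega⟩ + specNorm W) / (δ - specNorm W) + 1) * specNorm (W * F) := by
  classical
  set e : Fin r → Fin N := Fin.castLE hrN.le with he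
  set w : ℝ := specNorm W with hw
  have hw0 : 0 ≤ w := specNorm_nonneg W
  set g : ℝ := δ - w with hgdef
  have hg0 : 0 < g := by rw [hgdef]; linarith
  have hQQ : Q * Qᵀ = 1 := mul_eq_one_comm.1 hQ
  have hQtQt : Qt * Qtᵀ = 1 := mul_eq_one_comm.1 hQt
  have heinj : Function.Injective e := Fin.castLE_injective _
  have hFF : Fᵀ * F = 1 := by rw [hF]; exact orth_submatrix hQ e heinj
  have hFtFt : Ftᵀ * Ft = 1 := by rw [hFt]; exact orth_submatrix hQt e heinj
  -- submatrix product helper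
  have hsub : ∀ (M P : Matrix (Fin N) (Fin N) ℝ), M * (P.submatrix id e) = (M * P).submatrix id e := by
    intro M P
    ext i j
    simp [Matrix.mul_apply]
  -- eigen-equations
  have hAF : Am * F = F * Lam := by
    rw [hF, hLam, hsub]
    have h1 : Am * Q = Q * Matrix.diagonal lam := by
      rw [hAeig, Matrix.mul_assoc, hQ, Matrix.mul_one]
    rw [h1]
    ext i j
    rw [Matrix.submatrix_apply, Matrix.mul_diagonal, Matrix.mul_diagonal, Matrix.submatrix_apply]
  have hAtFt : (Am + W) * Ft = Ft * Lamt := by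
    rw [hFt, hLamt, hsub]
    have h1 : (Am + W) * Qt = Qt * Matrix.diagonal lamt := by
      rw [hAteig, Matrix.mul_assoc, hQt, Matrix.mul_one]
    rw [h1]
    ext i j
    rw [Matrix.submatrix_apply, Matrix.mul_diagonal, Matrix.mul_diagonal, Matrix.submatrix_apply]
  -- Weyl inequalities
  have hweyl : ∀ k : Fin N, lamt k ≤ lam k + w :=
    weyl_aux Q Qt lam lamt hQ hQt hlam hlamt Am W hAeig hAteig
  have hweyl' : ∀ k : Fin N, lam k ≤ lamt k + w := by
    intro k
    have := weyl_aux Qt Q lamt lam hQt hQ hlamt hlam (Am + W) (-W) hAteig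
      (by rw [add_neg_cancel_right]; exact hAeig) k
    rwa [specNorm_neg] at this
  -- index facts
  have hr1N : r - 1 < N := by omega
  set i0 : Fin N := ⟨0, by omega⟩
  set ir1 : Fin N := ⟨r - 1, hr1N⟩
  set ir : Fin N := ⟨r, hrN⟩
  have hlam0pos : 0 < lam i0 := lt_of_lt_of_le hpos (hlam i0 ir1 (by rw [Fin.le_def]; exact Nat.zero_le _))
  -- the auxiliary matrices
  set Dind : Matrix (Fin N) (Fin N) ℝ :=
    Matrix.diagonal (fun i : Fin N => if r ≤ (i:ℕ) then (1:ℝ) else 0) with hDind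
  set Y : Matrix (Fin N) (Fin r) ℝ := Dind * (Qtᵀ * F) with hY
  set Y' : Matrix (Fin N) (Fin r) ℝ := Dind * (Qtᵀ * (W * F)) with hY'
  have hDtrans : Dindᵀ = Dind := Matrix.diagonal_transpose _
  have hDD : Dind * Dind = Dind := by
    rw [hDind, Matrix.diagonal_mul_diagonal]
    exact congrArg Matrix.diagonal (funext fun i => by by_cases h : r ≤ (i:ℕ) <;> simp [h])
  have hDspec : specNorm Dind ≤ 1 := by
    rw [hDind]
    apply specNorm_diagonal_le zero_le_one
    intro i
    split_ifs <;> simp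
  have hQttspec : specNorm Qtᵀ ≤ 1 :=
    specNorm_orth_le_one (by rw [Matrix.transpose_transpose]; exact hQtQt)
  -- commutation relation
  have hQtAt : Qtᵀ * (Am + W) = Matrix.diagonal lamt * Qtᵀ := by
    rw [hAteig, ← Matrix.mul_assoc, ← Matrix.mul_assoc, hQt, Matrix.one_mul]
  have hdcomm : Matrix.diagonal lamt * Dind = Dind * Matrix.diagonal lamt := by
    rw [hDind, Matrix.diagonal_mul_diagonal, Matrix.diagonal_mul_diagonal]
    exact congrArg Matrix.diagonal (funext fun i => mul_comm _ _)
  have hY'eq : Y' = Matrix.diagonal lamt * Y - Y * Lam := by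
    have e1 : Y * Lam = Dind * (Qtᵀ * (Am * F)) := by
      rw [hY, Matrix.mul_assoc, Matrix.mul_assoc, ← hAF]
    have e2 : Matrix.diagonal lamt * Y = Dind * (Qtᵀ * ((Am + W) * F)) := by
      rw [hY, ← Matrix.mul_assoc, hdcomm, Matrix.mul_assoc,
        ← Matrix.mul_assoc (Matrix.diagonal lamt) Qtᵀ F, ← hQtAt, Matrix.mul_assoc]
    rw [hY', e2, e1, Matrix.add_mul, Matrix.mul_add, Matrix.mul_add, add_sub_cancel_left]
  -- row vanishing of Y and Y'
  have hrowY : ∀ i : Fin N, (i:ℕ) < r → ∀ j, Y i j = 0 := by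
    intro i hi j
    rw [hY, hDind, Matrix.diagonal_mul]
    rw [if_neg (by omega)]
    ring
  -- entrywise commutator bound
  have hlam'lb : ∀ j : Fin r, lam ir1 ≤ lam (e j) := by
    intro j
    apply hlam (e j) ir1
    rw [Fin.le_def]
    simp only [he, Fin.coe_castLE]
    show (j:ℕ) ≤ r - 1; have := j.isLt; omega
  have hlamtub : ∀ i : Fin N, r ≤ (i:ℕ) → lamt i ≤ lam ir + w := by
    intro i hi
    have h1 : lamt i ≤ lamt ir := hlamt ir i (by rw [Fin.le_def]; exact hi)
    linarith [hweyl ir]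
  have hgap : ∀ (i : Fin N) (j : Fin r), r ≤ (i:ℕ) → g ≤ lam (e j) - lamt i := by
    intro i j hi
    have := hlam'lb j
    have := hlamtub i hi
    have hde : δ = lam ir1 - lam ir := hδ
    rw [hgdef]
    linarith
  have hentry : ∀ (i : Fin N) (j : Fin r), g * |Y i j| ≤ |Y' i j| := by
    intro i j
    by_cases hi : (i:ℕ) < r
    · rw [hrowY i hi j]
      simp [abs_nonneg]
    · push_neg at hi
      have hcomm_ij : Y' i j = -((lam (e j) - lamt i) * Y i j) := by
        have := congrFun (congrFun hY'eq i) j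
        rw [Matrix.sub_apply, Matrix.diagonal_mul, hLam, Matrix.mul_diagonal] at this
        rw [this]
        ring
      rw [hcomm_ij, abs_neg, abs_mul]
      have hgap' := hgap i j hi
      have habs : g ≤ |lam (e j) - lamt i| := le_trans hgap' (le_abs_self _)
      exact mul_le_mul_of_nonneg_right habs (abs_nonneg _) |>.trans_eq rfl
  -- Davis–Kahan bounds on Y
  have hYfrob : g * frobNorm Y ≤ frobNorm Y' := dk_frob Y Y' g (le_of_lt hg0) hentry
  have hYspec : g * specNorm Y ≤ specNorm Y' := by
    have := dk_spec hr Y Y' lamt (fun j => lam (e j)) (lam ir1) (lam ir + w) hrowY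
      (by rw [hY'eq, hLam]) hlam'lb hlamtub
      (by
        have hde : δ = lam ir1 - lam ir := hδ
        linarith)
    have hgeq : lam ir1 - (lam ir + w) = g := by
      have hde : δ = lam ir1 - lam ir := hδ
      rw [hgdef]
      linarith
    rwa [hgeq] at this
  -- norm bounds for Y'
  have hY'spec : specNorm Y' ≤ specNorm (W * F) := by
    rw [hY']
    exact le_trans (spec_contract_left _ hDspec) (spec_contract_left _ hQttspec)
  have hY'frob : frobNorm Y' ≤ frobNorm (W * F) := by
    rw [hY']
    exact le_trans (frob_contract_left _ hDspec) (frob_contract_left _ hQttspec)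
  -- Y^T Y = 1 - H H^T
  set D' : Matrix (Fin N) (Fin N) ℝ :=
    Matrix.diagonal (fun i : Fin N => if (i:ℕ) < r then (1:ℝ) else 0) with hD'
  have hFtFtT : Ft * Ftᵀ = Qt * (D' * Qtᵀ) := by
    ext i i'
    rw [hFt, Matrix.mul_apply, Matrix.mul_apply]
    have lhs_eq : ∑ j : Fin r, (Qt.submatrix id e) i j * (Qt.submatrix id e)ᵀ j i'
        = ∑ j : Fin r, Qt i (e j) * Qt i' (e j) := by
      apply Finset.sum_congr rfl
      intro j _
      rw [Matrix.transpose_apply, Matrix.submatrix_apply, Matrix.submatrix_apply]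
      rfl
    rw [lhs_eq, ← sum_dite_castLE hrN.le (fun j => Qt i (e j) * Qt i' (e j))]
    apply Finset.sum_congr rfl
    intro k _
    rw [hD', Matrix.diagonal_mul, Matrix.transpose_apply]
    by_cases h : (k:ℕ) < r
    · rw [dif_pos h, if_pos h]
      have hek : e ⟨(k:ℕ), h⟩ = k := Fin.ext rfl
      rw [hek]
      ring
    · rw [dif_neg h, if_neg h]
      ring
  have hDD' : D' + Dind = 1 := by
    rw [hD', hDind, Matrix.diagonal_add, ← Matrix.diagonal_one]
    exact congrArg Matrix.diagonal (funext fun i => by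
      by_cases h : (i:ℕ) < r
      · rw [if_pos h, if_neg (by omega)]; ring
      · rw [if_neg h, if_pos (by omega)]; ring)
  have hQtD : Qt * (Dind * Qtᵀ) = 1 - Ft * Ftᵀ := by
    have h1 : Dind = 1 - D' := by rw [← hDD']; abel
    rw [h1, Matrix.sub_mul, Matrix.mul_sub, Matrix.one_mul, hQtQt, hFtFtT]
  have hYtY : Yᵀ * Y = 1 - (Fᵀ * Ft) * (Ftᵀ * F) := by
    have ht : Yᵀ = (Fᵀ * Qt) * Dind := by
      rw [hY, Matrix.transpose_mul, Matrix.transpose_mul, Matrix.transpose_transpose, hDtrans]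
    rw [ht, hY, Matrix.mul_assoc (Fᵀ * Qt) Dind (Dind * (Qtᵀ * F)), ← Matrix.mul_assoc Dind Dind (Qtᵀ * F),
      hDD, ← Matrix.mul_assoc Dind Qtᵀ F, ← Matrix.mul_assoc (Fᵀ * Qt) (Dind * Qtᵀ) F,
      Matrix.mul_assoc Fᵀ Qt (Dind * Qtᵀ), hQtD, Matrix.mul_sub, Matrix.mul_one,
      Matrix.sub_mul, hFF, ← Matrix.mul_assoc Fᵀ Ft Ftᵀ, Matrix.mul_assoc (Fᵀ * Ft) Ftᵀ F]
  -- singular values facts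
  set Sig : Matrix (Fin r) (Fin r) ℝ := Matrix.diagonal σtil with hSig
  have hHT : (Fᵀ * Ft) * (Ftᵀ * F) = A' * (Sig * (Sig * A'ᵀ)) := by
    have h1 : Ftᵀ * F = (Fᵀ * Ft)ᵀ := by
      rw [Matrix.transpose_mul, Matrix.transpose_transpose]
    have hSigT : Sigᵀ = Sig := by rw [hSig]; exact Matrix.diagonal_transpose _
    rw [h1, hH, Matrix.transpose_mul, Matrix.transpose_mul, Matrix.transpose_transpose, hSigT]
    calc A' * Matrix.diagonal σtil * B'ᵀ * (B' * (Matrix.diagonal σtil * A'ᵀ))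
        = A' * Matrix.diagonal σtil * (B'ᵀ * B') * (Matrix.diagonal σtil * A'ᵀ) := by
          rw [Matrix.mul_assoc (A' * Matrix.diagonal σtil) B'ᵀ _, ← Matrix.mul_assoc B'ᵀ B' _,
            ← Matrix.mul_assoc (A' * Matrix.diagonal σtil) (B'ᵀ * B') _]
      _ = A' * (Matrix.diagonal σtil * (Matrix.diagonal σtil * A'ᵀ)) := by
          rw [hB', Matrix.mul_one, Matrix.mul_assoc A' (Matrix.diagonal σtil) _]
  have hquadcol : ∀ i : Fin r, ((Y * A')ᵀ * (Y * A')) i i = 1 - (σtil i)^2 := by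
    intro i
    have h1 : (Y * A')ᵀ * (Y * A') = A'ᵀ * (Yᵀ * Y) * A' := by
      rw [Matrix.transpose_mul, Matrix.mul_assoc A'ᵀ Yᵀ (Y * A'), ← Matrix.mul_assoc Yᵀ Y A',
        ← Matrix.mul_assoc A'ᵀ (Yᵀ * Y) A']
    have h2 : A'ᵀ * (Yᵀ * Y) * A' = 1 - Sig * Sig := by
      rw [hYtY, hHT, Matrix.mul_sub, Matrix.sub_mul, Matrix.mul_one, hA']
      congr 1
      calc A'ᵀ * (A' * (Sig * (Sig * A'ᵀ))) * A'
          = (A'ᵀ * A') * (Sig * Sig) * (A'ᵀ * A') := by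
            rw [← Matrix.mul_assoc A'ᵀ A' _, ← Matrix.mul_assoc Sig Sig A'ᵀ,
              ← Matrix.mul_assoc (A'ᵀ * A') (Sig * Sig) A'ᵀ,
              Matrix.mul_assoc (A'ᵀ * A' * (Sig * Sig)) A'ᵀ A']
        _ = Sig * Sig := by rw [hA', Matrix.one_mul, Matrix.mul_one]
    rw [h1, h2, Matrix.sub_apply, hSig, Matrix.diagonal_mul_diagonal, Matrix.one_apply_eq,
      Matrix.diagonal_apply_eq]
    ring
  have hcolsq : ∀ i : Fin r, ∑ k, ((Y * A') k i)^2 = 1 - (σtil i)^2 := by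
    intro i
    rw [← hquadcol i, Matrix.mul_apply]
    apply Finset.sum_congr rfl
    intro k _
    rw [Matrix.transpose_apply]
    ring
  have hσ1 : ∀ i, σtil i ≤ 1 := by
    intro i
    have h1 : 0 ≤ 1 - (σtil i)^2 := by
      rw [← hcolsq i]
      positivity
    nlinarith [hσtil i]
  have hcolA : ∀ i : Fin r, vecNorm (fun k => A' k i) = 1 := by
    intro i
    have h1 : ∑ k, (A' k i)^2 = 1 := by
      have h2 : (A'ᵀ * A') i i = ∑ k, (A' k i)^2 := by
        rw [Matrix.mul_apply]
        apply Finset.sum_congr rfl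
        intro k _
        rw [Matrix.transpose_apply]
        ring
      rw [hA'] at h2
      rw [← h2, Matrix.one_apply_eq]
    rw [vecNorm, h1, Real.sqrt_one]
  have hcolY : ∀ i : Fin r, vecNorm (Y *ᵥ (fun k => A' k i)) ^ 2 = 1 - (σtil i)^2 := by
    intro i
    rw [vecNorm_sq, ← hcolsq i]
    apply Finset.sum_congr rfl
    intro k _
    rw [← col_mul Y A' i]
  -- norms of 1 - Sig
  have hone_sub_sig : (1 : Matrix (Fin r) (Fin r) ℝ) - Sig = Matrix.diagonal (fun i => 1 - σtil i) := by
    rw [hSig, ← Matrix.diagonal_one, Matrix.diagonal_sub]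
  have hspecA' : specNorm A' ≤ 1 := specNorm_orth_le_one hA'
  have hfrobD : frobNorm ((1 : Matrix (Fin r) (Fin r) ℝ) - Sig) ≤ frobNorm Y := by
    have h1 : frobNorm ((1 : Matrix (Fin r) (Fin r) ℝ) - Sig) ≤ frobNorm (Y * A') := by
      apply le_of_sq_le_sq' (frobNorm_nonneg _) (frobNorm_nonneg _)
      rw [hone_sub_sig, frobNorm_diagonal, frobNorm_sq_cols]
      have h2 : ∀ i : Fin r, (1 - σtil i)^2 ≤ vecNorm (fun k => (Y * A') k i) ^ 2 := by
        intro i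
        have h3 : vecNorm (fun k => (Y * A') k i) ^ 2 = 1 - (σtil i)^2 := by
          rw [col_mul Y A' i]
          exact hcolY i
        rw [h3]
        nlinarith [hσtil i, hσ1 i]
      exact Finset.sum_le_sum (fun i _ => h2 i)
    exact le_trans h1 (frob_contract_right Y hspecA')
  have hspecDle : specNorm ((1 : Matrix (Fin r) (Fin r) ℝ) - Sig) ≤ specNorm Y := by
    rw [hone_sub_sig]
    apply specNorm_diagonal_le (specNorm_nonneg Y)
    intro i
    rw [abs_of_nonneg (by linarith [hσ1 i])]
    have h1 : (1 - σtil i) ≤ vecNorm (Y *ᵥ (fun k => A' k i)) := by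
      apply le_of_sq_le_sq' (by linarith [hσ1 i]) (vecNorm_nonneg _)
      rw [hcolY i]
      nlinarith [hσtil i, hσ1 i]
    have h2 : vecNorm (Y *ᵥ (fun k => A' k i)) ≤ specNorm Y := by
      have := vecNorm_mulVec_le Y (fun k => A' k i)
      rwa [hcolA i, mul_one] at this
    linarith
  -- G - H factorisation and norm bounds
  have hGH : G - Fᵀ * Ft = A' * (((1 : Matrix (Fin r) (Fin r) ℝ) - Sig) * B'ᵀ) := by
    rw [hG, hH, Matrix.sub_mul, Matrix.one_mul, Matrix.mul_sub, Matrix.mul_assoc]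
  have hspecB't : specNorm B'ᵀ ≤ 1 :=
    specNorm_orth_le_one (P := B'ᵀ)
      (by rw [Matrix.transpose_transpose]; exact mul_eq_one_comm.1 hB')
  have hspecFt : specNorm Ft ≤ 1 := specNorm_orth_le_one hFtFt
  have hfrobWF0 : 0 ≤ frobNorm (W * F) := frobNorm_nonneg _
  have hspecWF0 : 0 ≤ specNorm (W * F) := specNorm_nonneg _
  have hfrobGH : frobNorm (G - Fᵀ * Ft) ≤ frobNorm (W * F) / g := by
    have h1 : frobNorm (G - Fᵀ * Ft) ≤ frobNorm Y := by
      rw [hGH]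
      exact le_trans (frob_contract_left _ hspecA')
        (le_trans (frob_contract_right _ hspecB't) hfrobD)
    have h2 : frobNorm Y ≤ frobNorm (W * F) / g := by
      rw [le_div_iff₀ hg0]
      calc frobNorm Y * g = g * frobNorm Y := mul_comm _ _
        _ ≤ frobNorm Y' := hYfrob
        _ ≤ frobNorm (W * F) := hY'frob
    linarith
  have hspecGH : specNorm (G - Fᵀ * Ft) ≤ specNorm (W * F) / g := by
    have h1 : specNorm (G - Fᵀ * Ft) ≤ specNorm Y := by
      rw [hGH]
      exact le_trans (spec_contract_left _ hspecA')
        (le_trans (spec_contract_right _ hspecB't) hspecDle)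
    have h2 : specNorm Y ≤ specNorm (W * F) / g := by
      rw [le_div_iff₀ hg0]
      calc specNorm Y * g = g * specNorm Y := mul_comm _ _
        _ ≤ specNorm Y' := hYspec
        _ ≤ specNorm (W * F) := hY'spec
    linarith
  -- commutator with H
  have hLF : Lam * Fᵀ = Fᵀ * Am := by
    have h1 := congrArg Matrix.transpose hAF
    rw [Matrix.transpose_mul, Matrix.transpose_mul] at h1
    have hLamT : Lamᵀ = Lam := by rw [hLam]; exact Matrix.diagonal_transpose _
    have hAmT : Amᵀ = Am := hAsymm
    rw [hLamT, hAmT] at h1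
    exact h1.symm
  have hcommH : Lam * (Fᵀ * Ft) - (Fᵀ * Ft) * Lamt = -((W * F)ᵀ * Ft) := by
    have h1 : Lam * (Fᵀ * Ft) = Fᵀ * (Am * Ft) := by
      rw [← Matrix.mul_assoc, hLF, Matrix.mul_assoc]
    have h2 : (Fᵀ * Ft) * Lamt = Fᵀ * ((Am + W) * Ft) := by
      rw [Matrix.mul_assoc, ← hAtFt]
    have h3 : (W * F)ᵀ * Ft = Fᵀ * (W * Ft) := by
      rw [Matrix.transpose_mul, hWsymm.eq, Matrix.mul_assoc]
    rw [h1, h2, h3, Matrix.add_mul, Matrix.mul_add]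
    abel
  -- eigenvalue norm bounds
  have hspecLam : specNorm Lam ≤ lam i0 := by
    rw [hLam]
    apply specNorm_diagonal_le (le_of_lt hlam0pos)
    intro j
    rw [abs_of_pos (lt_of_lt_of_le hpos (hlam'lb j))]
    exact hlam i0 (e j) (by rw [Fin.le_def]; exact Nat.zero_le _)
  have hspecLamt : specNorm Lamt ≤ lam i0 + w := by
    rw [hLamt]
    apply specNorm_diagonal_le (by linarith)
    intro j
    rw [abs_le]
    constructor
    · have h1 : lamt ir1 ≤ lamt (e j) := hlamt (e j) ir1 (by rw [Fin.le_def]; simp [he]; show (j:ℕ) ≤ r - 1; have := j.isLt; omega)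
      have h2 := hweyl' ir1
      have h3 : lam ir1 = lam ⟨r - 1, by omega⟩ := rfl
      linarith [hpos]
    · have h1 : lamt (e j) ≤ lamt i0 := hlamt i0 (e j) (by rw [Fin.le_def]; exact Nat.zero_le _)
      linarith [hweyl i0]
  -- final assembly
  have hid : Lam * G - G * Lamt =
      (Lam * (G - Fᵀ * Ft) - (G - Fᵀ * Ft) * Lamt) + (Lam * (Fᵀ * Ft) - (Fᵀ * Ft) * Lamt) := by
    noncomm_ring
  have hlam00 : lam ⟨0, by omega⟩ = lam i0 := rfl
  have halg : ∀ T : ℝ, 0 ≤ T →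
      lam i0 * (T / g) + (T / g) * (lam i0 + w) + T = ((2 * lam i0 + w) / g + 1) * T := by
    intro T _
    field_simp
    ring
  constructor
  · -- Frobenius
    have hGH0 : 0 ≤ frobNorm (G - Fᵀ * Ft) := frobNorm_nonneg _
    have t1 : frobNorm (Lam * (G - Fᵀ * Ft)) ≤ lam i0 * (frobNorm (W * F) / g) := by
      calc frobNorm (Lam * (G - Fᵀ * Ft)) ≤ specNorm Lam * frobNorm (G - Fᵀ * Ft) :=
            frob_mul_le_spec_mul_frob _ _
        _ ≤ lam i0 * (frobNorm (W * F) / g) := by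
            apply mul_le_mul hspecLam hfrobGH hGH0 (le_of_lt hlam0pos)
    have t2 : frobNorm ((G - Fᵀ * Ft) * Lamt) ≤ (frobNorm (W * F) / g) * (lam i0 + w) := by
      calc frobNorm ((G - Fᵀ * Ft) * Lamt) ≤ frobNorm (G - Fᵀ * Ft) * specNorm Lamt :=
            frob_mul_le_frob_mul_spec _ _
        _ ≤ (frobNorm (W * F) / g) * (lam i0 + w) := by
            apply mul_le_mul hfrobGH hspecLamt (specNorm_nonneg _) (by positivity)
    have t3 : frobNorm (Lam * (Fᵀ * Ft) - (Fᵀ * Ft) * Lamt) ≤ frobNorm (W * F) := by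
      rw [hcommH, frobNorm_neg]
      calc frobNorm ((W * F)ᵀ * Ft) ≤ frobNorm ((W * F)ᵀ) := frob_contract_right _ hspecFt
        _ = frobNorm (W * F) := frobNorm_transpose _
    calc frobNorm (Lam * G - G * Lamt)
        ≤ frobNorm (Lam * (G - Fᵀ * Ft) - (G - Fᵀ * Ft) * Lamt)
          + frobNorm (Lam * (Fᵀ * Ft) - (Fᵀ * Ft) * Lamt) := by
          rw [hid]; exact frobNorm_triangle _ _
      _ ≤ (frobNorm (Lam * (G - Fᵀ * Ft)) + frobNorm ((G - Fᵀ * Ft) * Lamt))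
          + frobNorm (Lam * (Fᵀ * Ft) - (Fᵀ * Ft) * Lamt) := by
          linarith [frobNorm_sub_le (Lam * (G - Fᵀ * Ft)) ((G - Fᵀ * Ft) * Lamt)]
      _ ≤ lam i0 * (frobNorm (W * F) / g) + (frobNorm (W * F) / g) * (lam i0 + w)
          + frobNorm (W * F) := by linarith
      _ = ((2 * lam i0 + w) / g + 1) * frobNorm (W * F) := halg _ hfrobWF0
      _ = ((2 * lam ⟨0, by omega⟩ + specNorm W) / (δ - specNorm W) + 1) * frobNorm (W * F) := by
          rw [hlam00, ← hw, ← hgdef]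
  · -- spectral
    have hGH0 : 0 ≤ specNorm (G - Fᵀ * Ft) := specNorm_nonneg _
    have t1 : specNorm (Lam * (G - Fᵀ * Ft)) ≤ lam i0 * (specNorm (W * F) / g) := by
      calc specNorm (Lam * (G - Fᵀ * Ft)) ≤ specNorm Lam * specNorm (G - Fᵀ * Ft) :=
            specNorm_mul_le _ _
        _ ≤ lam i0 * (specNorm (W * F) / g) := by
            apply mul_le_mul hspecLam hspecGH hGH0 (le_of_lt hlam0pos)
    have t2 : specNorm ((G - Fᵀ * Ft) * Lamt) ≤ (specNorm (W * F) / g) * (lam i0 + w) := by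
      calc specNorm ((G - Fᵀ * Ft) * Lamt) ≤ specNorm (G - Fᵀ * Ft) * specNorm Lamt :=
            specNorm_mul_le _ _
        _ ≤ (specNorm (W * F) / g) * (lam i0 + w) := by
            apply mul_le_mul hspecGH hspecLamt (specNorm_nonneg _) (by positivity)
    have t3 : specNorm (Lam * (Fᵀ * Ft) - (Fᵀ * Ft) * Lamt) ≤ specNorm (W * F) := by
      rw [hcommH, specNorm_neg]
      calc specNorm ((W * F)ᵀ * Ft) ≤ specNorm ((W * F)ᵀ) := spec_contract_right _ hspecFt
        _ = specNorm (W * F) := specNorm_transpose _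
    calc specNorm (Lam * G - G * Lamt)
        ≤ specNorm (Lam * (G - Fᵀ * Ft) - (G - Fᵀ * Ft) * Lamt)
          + specNorm (Lam * (Fᵀ * Ft) - (Fᵀ * Ft) * Lamt) := by
          rw [hid]; exact specNorm_triangle _ _
      _ ≤ (specNorm (Lam * (G - Fᵀ * Ft)) + specNorm ((G - Fᵀ * Ft) * Lamt))
          + specNorm (Lam * (Fᵀ * Ft) - (Fᵀ * Ft) * Lamt) := by
          linarith [specNorm_sub_le (Lam * (G - Fᵀ * Ft)) ((G - Fᵀ * Ft) * Lamt)]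
      _ ≤ lam i0 * (specNorm (W * F) / g) + (specNorm (W * F) / g) * (lam i0 + w)
          + specNorm (W * F) := by linarith
      _ = ((2 * lam i0 + w) / g + 1) * specNorm (W * F) := halg _ hspecWF0
      _ = ((2 * lam ⟨0, by omega⟩ + specNorm W) / (δ - specNorm W) + 1) * specNorm (W * F) := by
          rw [hlam00, ← hw, ← hgdef]
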